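/- Let D be a set of edges of the q-T-fractal △_q. If D is not a σ-τ edge cut (i.e., σ and τ are still connected in △_q − D), then dist_{△_q − D}(σ, τ) ≤ |D| + 1. -/

import Mathlib

/-- Auxiliary adjacency: `b = a + 2^(q-i)` for some `i ≤ q` with `2^(q-i) ∣ a`.
These are exactly the (directed versions of the) edges of the `q`-T-fractal,
where the boundary `B_i` consists of the edges at scale `2^(q-i)`. -/
def fracAdjAux (q a b : ℕ) : Prop :=
  ∃ i ≤ q, 2 ^ (q - i) ∣ a ∧ b = a + 2 ^ (q - i)

/-- The `q`-T-fractal, realized on the vertex set `{0, 1, …, 2^q}` (the vertices of the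
outermost boundary path): the left copy of `△_{q-1}` lives on `{0,…,2^{q-1}}`, the right
copy on `{2^{q-1},…,2^q}`, and `{0, 2^q}` is the extra edge; `σ = 0` and `τ = 2^q`. -/
def TFractal (q : ℕ) : SimpleGraph (Fin (2 ^ q + 1)) where
  Adj a b := fracAdjAux q a.val b.val ∨ fracAdjAux q b.val a.val
  symm := ⟨fun _ _ h => h.symm⟩
  loopless := by
    refine ⟨?_⟩
    intro a h
    rcases h with ⟨i, _, _, h⟩ | ⟨i, _, _, h⟩ <;>
      · have := Nat.two_pow_pos (q - i)
        omega

/-- The special vertex `σ` of the `q`-T-fractal. -/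
def sigV (q : ℕ) : Fin (2 ^ q + 1) := ⟨0, Nat.succ_pos _⟩

/-- The special vertex `τ` of the `q`-T-fractal. -/
def tauV (q : ℕ) : Fin (2 ^ q + 1) := ⟨2 ^ q, Nat.lt_succ_self _⟩

/-- The boundary `B_i` of the `q`-T-fractal: the edges created in round `i`,
i.e. the edges `{a, a + 2^(q-i)}` with `2^(q-i) ∣ a`. -/
def boundaryB (q i : ℕ) : Set (Sym2 (Fin (2 ^ q + 1))) :=
  { e | ∃ a b : Fin (2 ^ q + 1),
      e = s(a, b) ∧ 2 ^ (q - i) ∣ a.val ∧ b.val = a.val + 2 ^ (q - i) }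

/-- `C` is a `σ`-`τ` edge cut in the `q`-T-fractal. -/
def IsSTCut (q : ℕ) (C : Set (Sym2 (Fin (2 ^ q + 1)))) : Prop :=
  ¬ ((TFractal q).deleteEdges C).Reachable (sigV q) (tauV q)

/-- `C` is a minimum `σ`-`τ` edge cut in the `q`-T-fractal. -/
def MinSTCut (q : ℕ) (C : Set (Sym2 (Fin (2 ^ q + 1)))) : Prop :=
  C ⊆ (TFractal q).edgeSet ∧ IsSTCut q C ∧
    ∀ C' ⊆ (TFractal q).edgeSet, IsSTCut q C' → C.ncard ≤ C'.ncard

open SimpleGraph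

private def iv (q a b : ℕ) : Set (Sym2 (Fin (2 ^ q + 1))) :=
  {e | ∀ z ∈ e, a ≤ z.val ∧ z.val ≤ b}

private lemma struct_core {j a s x : ℕ} (ha : 2 ^ j ∣ a) (hx : 2 ^ s ∣ x)
    (h1 : a ≤ x) (h2 : x + 2 ^ s ≤ a + 2 ^ j) (hne : ¬(x = a ∧ s = j)) :
    x + 2 ^ s ≤ a + 2 ^ (j - 1) ∨ a + 2 ^ (j - 1) ≤ x := by
  have hsj : s ≤ j := by
    by_contra hc
    have := Nat.pow_lt_pow_right (by norm_num : 1 < 2) (Nat.lt_of_not_le hc)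
    omega
  rcases Nat.lt_or_ge s j with hlt | hge
  · have hs1 : s ≤ j - 1 := by omega
    have hdm : 2 ^ s ∣ a + 2 ^ (j - 1) :=
      Nat.dvd_add ((pow_dvd_pow 2 hsj).trans ha) (pow_dvd_pow 2 hs1)
    rcases Nat.lt_or_ge x (a + 2 ^ (j - 1)) with h | h
    · left
      have := Nat.le_of_dvd (by omega) (Nat.dvd_sub hdm hx)
      omega
    · right; exact h
  · have hs : s = j := le_antisymm hsj hge
    subst hs
    exact absurd ⟨by omega, rfl⟩ hne

private lemma tf_adj_struct {q : ℕ} (j a : ℕ) (ha : 2 ^ j ∣ a)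
    {u v : Fin (2 ^ q + 1)} (hadj : (TFractal q).Adj u v)
    (hu1 : a ≤ u.val) (hu2 : u.val ≤ a + 2 ^ j)
    (hv1 : a ≤ v.val) (hv2 : v.val ≤ a + 2 ^ j)
    (hne : ¬(u.val = a ∧ v.val = a + 2 ^ j))
    (hne' : ¬(v.val = a ∧ u.val = a + 2 ^ j)) :
    (u.val ≤ a + 2 ^ (j - 1) ∧ v.val ≤ a + 2 ^ (j - 1)) ∨
      (a + 2 ^ (j - 1) ≤ u.val ∧ a + 2 ^ (j - 1) ≤ v.val) := by
  have hadj' : fracAdjAux q u.val v.val ∨ fracAdjAux q v.val u.val := hadj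
  rcases hadj' with ⟨i, hi, hdvd, heq⟩ | ⟨i, hi, hdvd, heq⟩
  · have hcore := struct_core ha hdvd hu1 (by omega)
      (by rintro ⟨hh1, hh2⟩; exact hne ⟨hh1, by rw [heq, hh1, hh2]⟩)
    rcases hcore with h | h
    · left; omega
    · right; omega
  · have hcore := struct_core ha hdvd hv1 (by omega)
      (by rintro ⟨hh1, hh2⟩; exact hne' ⟨hh1, by rw [heq, hh1, hh2]⟩)
    rcases hcore with h | h
    · left; omega
    · right; omega

private lemma walk_prefix {q : ℕ} (j a : ℕ)
    {H : SimpleGraph (Fin (2 ^ q + 1))}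
    (hH : ∀ {x y : Fin (2 ^ q + 1)}, H.Adj x y → (TFractal q).Adj x y)
    (ha : 2 ^ j ∣ a)
    (htop : ∀ x y : Fin (2 ^ q + 1), H.Adj x y → ¬(x.val = a ∧ y.val = a + 2 ^ j))
    (m : Fin (2 ^ q + 1)) (hm : m.val = a + 2 ^ (j - 1)) :
    ∀ (n : ℕ) {u v : Fin (2 ^ q + 1)} (w : H.Walk u v), w.length ≤ n →
      (∀ z ∈ w.support, a ≤ z.val ∧ z.val ≤ a + 2 ^ j) →
      u.val ≤ a + 2 ^ (j - 1) → a + 2 ^ (j - 1) ≤ v.val →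
      ∃ w' : H.Walk u m, ∀ z ∈ w'.support, a ≤ z.val ∧ z.val ≤ a + 2 ^ (j - 1) := by
  intro n
  induction n with
  | zero =>
    intro u v w hlen hw hu hv
    cases w with
    | nil =>
      have hub := hw u (by simp)
      have huv : u = m := Fin.val_injective (by omega)
      subst huv
      refine ⟨.nil, ?_⟩
      intro z hz
      simp only [Walk.support_nil, List.mem_singleton] at hz
      subst hz; omega
    | cons h p => simp [Walk.length_cons] at hlen
  | succ n ih =>
    intro u v w hlen hw hu hv
    cases w with
    | nil =>
      have hub := hw u (by simp)
      have huv : u = m := Fin.val_injective (by omega)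
      subst huv
      refine ⟨.nil, ?_⟩
      intro z hz
      simp only [Walk.support_nil, List.mem_singleton] at hz
      subst hz; omega
    | cons h p =>
      rename_i x
      by_cases hum : u.val = a + 2 ^ (j - 1)
      · have huv : u = m := Fin.val_injective (by omega)
        subst huv
        refine ⟨.nil, ?_⟩
        intro z hz
        simp only [Walk.support_nil, List.mem_singleton] at hz
        have hub := hw z (by subst hz; simp)
        subst hz; omega
      · have hub := hw u (by simp)
        have hxb := hw x (by
          rw [Walk.support_cons]
          exact List.mem_cons_of_mem _ p.start_mem_support)
        have hstruct := tf_adj_struct j a ha (hH h) hub.1 hub.2 hxb.1 hxb.2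
          (htop u x h) (htop x u h.symm)
        rcases hstruct with ⟨hh1, hh2⟩ | ⟨hh1, hh2⟩
        · obtain ⟨w', hw'⟩ := ih p (by rw [Walk.length_cons] at hlen; omega)
            (fun z hz => hw z (by rw [Walk.support_cons]; exact List.mem_cons_of_mem _ hz))
            hh2 hv
          refine ⟨.cons h w', ?_⟩
          intro z hz
          rw [Walk.support_cons] at hz
          rcases List.mem_cons.mp hz with rfl | hz
          · exact ⟨hub.1, hh1⟩
          · exact hw' z hz
        · exact absurd hh1 (by omega)

private lemma walk_suffix_rev {q : ℕ} (j a : ℕ)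
    {H : SimpleGraph (Fin (2 ^ q + 1))}
    (hH : ∀ {x y : Fin (2 ^ q + 1)}, H.Adj x y → (TFractal q).Adj x y)
    (ha : 2 ^ j ∣ a)
    (htop : ∀ x y : Fin (2 ^ q + 1), H.Adj x y → ¬(x.val = a ∧ y.val = a + 2 ^ j))
    (m : Fin (2 ^ q + 1)) (hm : m.val = a + 2 ^ (j - 1)) :
    ∀ (n : ℕ) {u v : Fin (2 ^ q + 1)} (w : H.Walk u v), w.length ≤ n →
      (∀ z ∈ w.support, a ≤ z.val ∧ z.val ≤ a + 2 ^ j) →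
      a + 2 ^ (j - 1) ≤ u.val → v.val ≤ a + 2 ^ (j - 1) →
      ∃ w' : H.Walk u m, ∀ z ∈ w'.support, a + 2 ^ (j - 1) ≤ z.val ∧ z.val ≤ a + 2 ^ j := by
  intro n
  induction n with
  | zero =>
    intro u v w hlen hw hu hv
    cases w with
    | nil =>
      have hub := hw u (by simp)
      have huv : u = m := Fin.val_injective (by omega)
      subst huv
      refine ⟨.nil, ?_⟩
      intro z hz
      simp only [Walk.support_nil, List.mem_singleton] at hz
      subst hz; omega
    | cons h p => simp [Walk.length_cons] at hlen
  | succ n ih =>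
    intro u v w hlen hw hu hv
    cases w with
    | nil =>
      have hub := hw u (by simp)
      have huv : u = m := Fin.val_injective (by omega)
      subst huv
      refine ⟨.nil, ?_⟩
      intro z hz
      simp only [Walk.support_nil, List.mem_singleton] at hz
      subst hz; omega
    | cons h p =>
      rename_i x
      by_cases hum : u.val = a + 2 ^ (j - 1)
      · have huv : u = m := Fin.val_injective (by omega)
        subst huv
        refine ⟨.nil, ?_⟩
        intro z hz
        simp only [Walk.support_nil, List.mem_singleton] at hz
        have hub := hw z (by subst hz; simp)
        subst hz; omega
      · have hub := hw u (by simp)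
        have hxb := hw x (by
          rw [Walk.support_cons]
          exact List.mem_cons_of_mem _ p.start_mem_support)
        have hstruct := tf_adj_struct j a ha (hH h) hub.1 hub.2 hxb.1 hxb.2
          (htop u x h) (htop x u h.symm)
        rcases hstruct with ⟨hh1, hh2⟩ | ⟨hh1, hh2⟩
        · exact absurd hh1 (by omega)
        · obtain ⟨w', hw'⟩ := ih p (by rw [Walk.length_cons] at hlen; omega)
            (fun z hz => hw z (by rw [Walk.support_cons]; exact List.mem_cons_of_mem _ hz))
            hh2 hv
          refine ⟨.cons h w', ?_⟩
          intro z hz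
          rw [Walk.support_cons] at hz
          rcases List.mem_cons.mp hz with rfl | hz
          · exact ⟨hh1, hub.2⟩
          · exact hw' z hz

private lemma adj_pow {q j a : ℕ} (ha : 2 ^ j ∣ a) (h2 : a + 2 ^ j ≤ 2 ^ q)
    (σ' τ' : Fin (2 ^ q + 1)) (hσ : σ'.val = a) (hτ : τ'.val = a + 2 ^ j) :
    (TFractal q).Adj σ' τ' := by
  have hjq : j ≤ q := by
    have h1 : 2 ^ j ≤ 2 ^ q := by omega
    exact (Nat.pow_le_pow_iff_right (by norm_num)).mp h1
  exact Or.inl ⟨q - j, Nat.sub_le q j, by rw [Nat.sub_sub_self hjq, hσ]; exact ⟨ha, by omega⟩⟩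

private lemma key (q : ℕ) (D : Set (Sym2 (Fin (2 ^ q + 1)))) (hD : D ⊆ (TFractal q).edgeSet) :
    ∀ (j a : ℕ), 2 ^ j ∣ a → a + 2 ^ j ≤ 2 ^ q →
      ∀ (σ' τ' : Fin (2 ^ q + 1)), σ'.val = a → τ'.val = a + 2 ^ j →
      ∀ (w : ((TFractal q).deleteEdges D).Walk σ' τ'),
        (∀ z ∈ w.support, a ≤ z.val ∧ z.val ≤ a + 2 ^ j) →
      ∃ w' : ((TFractal q).deleteEdges D).Walk σ' τ',
        w'.length ≤ (D ∩ iv q a (a + 2 ^ j)).ncard + 1 := by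
  intro j
  induction j with
  | zero =>
    intro a ha h2 σ' τ' hσ hτ w hw
    by_cases htopD : s(σ', τ') ∈ D
    · exfalso
      cases w with
      | nil => simp only [pow_zero] at hτ; omega
      | cons h p =>
        rename_i x
        have hxb := hw x (by
          rw [Walk.support_cons]
          exact List.mem_cons_of_mem _ p.start_mem_support)
        have hd := (SimpleGraph.deleteEdges_adj).mp h
        have hxne : x ≠ σ' := fun he => (TFractal q).loopless.irrefl σ' (he ▸ hd.1)
        have hxτ : x = τ' := by
          apply Fin.val_injective
          simp only [pow_zero] at hxb hτ ⊢
          have : x.val ≠ σ'.val := fun hc => hxne (Fin.val_injective hc)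
          omega
        subst hxτ
        exact hd.2 htopD
    · have hadj : ((TFractal q).deleteEdges D).Adj σ' τ' :=
        (SimpleGraph.deleteEdges_adj).mpr ⟨adj_pow ha h2 σ' τ' hσ hτ, htopD⟩
      exact ⟨.cons hadj .nil, by simpa using Nat.succ_le_succ (Nat.zero_le _)⟩
  | succ j ih =>
    intro a ha h2 σ' τ' hσ hτ w hw
    by_cases htopD : s(σ', τ') ∈ D
    · have hps : 2 ^ (j + 1) = 2 ^ j + 2 ^ j := by rw [pow_succ]; omega
      have hpos : 0 < 2 ^ j := Nat.two_pow_pos j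
      have hE : (2:ℕ) ^ (j + 1 - 1) = 2 ^ j := by norm_num
      have hmlt : a + 2 ^ j < 2 ^ q + 1 := by omega
      set m0 : Fin (2 ^ q + 1) := ⟨a + 2 ^ j, hmlt⟩ with hm0def
      have hm0 : m0.val = a + 2 ^ ((j + 1) - 1) := rfl
      have hH' : ∀ {x y : Fin (2 ^ q + 1)},
          ((TFractal q).deleteEdges D).Adj x y → (TFractal q).Adj x y :=
        fun h => ((SimpleGraph.deleteEdges_adj).mp h).1
      have htop : ∀ x y : Fin (2 ^ q + 1), ((TFractal q).deleteEdges D).Adj x y →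
          ¬(x.val = a ∧ y.val = a + 2 ^ (j + 1)) := by
        rintro x y hxy ⟨hx, hy⟩
        have hx' : x = σ' := Fin.val_injective (by omega)
        have hy' : y = τ' := Fin.val_injective (by omega)
        subst hx'; subst hy'
        exact ((SimpleGraph.deleteEdges_adj).mp hxy).2 htopD
      obtain ⟨w1, hw1⟩ := walk_prefix (j + 1) a hH' ha htop m0 hm0 w.length w le_rfl hw
        (by omega) (by omega)
      obtain ⟨w2r, hw2r⟩ := walk_suffix_rev (j + 1) a hH' ha htop m0 hm0
        w.reverse.length w.reverse le_rfl
        (by intro z hz; rw [Walk.support_reverse] at hz; exact hw z (List.mem_reverse.mp hz))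
        (by omega) (by omega)
      have hdvd' : 2 ^ j ∣ a := (pow_dvd_pow 2 (Nat.le_succ j)).trans ha
      obtain ⟨w1', h1'⟩ := ih a hdvd' (by omega) σ' m0 hσ rfl w1 hw1
      obtain ⟨w2', h2'⟩ := ih (a + 2 ^ j) (Nat.dvd_add hdvd' dvd_rfl) (by omega) m0 τ' rfl
        (by omega) w2r.reverse
        (by
          intro z hz
          rw [Walk.support_reverse] at hz
          have := hw2r z (List.mem_reverse.mp hz)
          omega)
      set SL := D ∩ iv q a (a + 2 ^ j) with hSLdef
      set SR := D ∩ iv q (a + 2 ^ j) (a + 2 ^ j + 2 ^ j) with hSRdef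
      have hτmem : τ' ∈ s(σ', τ') := Sym2.mem_mk_right _ _
      have hσmem : σ' ∈ s(σ', τ') := Sym2.mem_mk_left _ _
      have hd2 : Disjoint SR {s(σ', τ')} := by
        rw [Set.disjoint_singleton_right]
        intro hmem
        have := hmem.2 σ' hσmem
        omega
      have hd1 : Disjoint SL (SR ∪ {s(σ', τ')}) := by
        rw [Set.disjoint_union_right, Set.disjoint_singleton_right]
        constructor
        · rw [Set.disjoint_left]
          intro e heL heR
          induction e using Sym2.ind with
          | _ x y =>
            have hx1 := heL.2 x (Sym2.mem_mk_left _ _)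
            have hx2 := heR.2 x (Sym2.mem_mk_left _ _)
            have hy1 := heL.2 y (Sym2.mem_mk_right _ _)
            have hy2 := heR.2 y (Sym2.mem_mk_right _ _)
            have hxy : x = y := Fin.val_injective (by omega)
            subst hxy
            exact (TFractal q).not_isDiag_of_mem_edgeSet (hD heL.1) (Sym2.isDiag_iff_proj_eq |>.mpr rfl)
        · intro hmem
          have := hmem.2 τ' hτmem
          omega
      have hsub : SL ∪ (SR ∪ {s(σ', τ')}) ⊆ D ∩ iv q a (a + 2 ^ (j + 1)) := by
        rintro e (he | he | he)
        · exact ⟨he.1, fun z hz => by have := he.2 z hz; omega⟩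
        · exact ⟨he.1, fun z hz => by have := he.2 z hz; omega⟩
        · rw [Set.mem_singleton_iff] at he
          subst he
          refine ⟨htopD, ?_⟩
          intro z hz
          rcases Sym2.mem_iff.mp hz with rfl | rfl
          · omega
          · omega
      have hcard : SL.ncard + SR.ncard + 1 ≤ (D ∩ iv q a (a + 2 ^ (j + 1))).ncard := by
        have e1 : (SL ∪ (SR ∪ {s(σ', τ')})).ncard = SL.ncard + (SR.ncard + 1) := by
          rw [Set.ncard_union_eq hd1 (Set.toFinite _) (Set.toFinite _),
            Set.ncard_union_eq hd2 (Set.toFinite _) (Set.toFinite _), Set.ncard_singleton]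
        have e2 := Set.ncard_le_ncard hsub (Set.toFinite _)
        omega
      refine ⟨w1'.append w2', ?_⟩
      rw [Walk.length_append]
      omega
    · have hadj : ((TFractal q).deleteEdges D).Adj σ' τ' :=
        (SimpleGraph.deleteEdges_adj).mpr ⟨adj_pow ha h2 σ' τ' hσ hτ, htopD⟩
      exact ⟨.cons hadj .nil, by simpa using Nat.succ_le_succ (Nat.zero_le _)⟩

/-- if `D` is a set of edges of `△_q` that is not a `σ`-`τ` edge cut,
then `σ` and `τ` are at distance at most `|D| + 1` in `△_q − D`. -/
theorem tfractal_not_cut_short_path (q : ℕ) (D : Set (Sym2 (Fin (2 ^ q + 1))))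
    (hD : D ⊆ (TFractal q).edgeSet)
    (hreach : ((TFractal q).deleteEdges D).Reachable (sigV q) (tauV q)) :
    ((TFractal q).deleteEdges D).dist (sigV q) (tauV q) ≤ D.ncard + 1 := by
  obtain ⟨w⟩ := hreach
  obtain ⟨w', hw'⟩ := key q D hD q 0 (dvd_zero _) (by omega) (sigV q) (tauV q) rfl
    (by simp [tauV]) w
    (by intro z hz; exact ⟨Nat.zero_le _, by have := z.isLt; omega⟩)
  have hd := SimpleGraph.dist_le w'
  have hn : (D ∩ iv q 0 (0 + 2 ^ q)).ncard ≤ D.ncard :=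
    Set.ncard_le_ncard Set.inter_subset_left (Set.toFinite _)
  omega
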